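/- Let T ≥ 2 be an integer, ρ ∈ (−1,1), σ > 0, and let λ_1,…,λ_T > 0 and q_1,…,q_T > 0 be real numbers. Set ξ_t = σ²(1−ρ²)λ_t²/q_t for t = 1,…,T, and let Λ = diag(λ_1,…,λ_T) and Q = diag(q_1,…,q_T). Then the matrix Σ*_T (built from these ξ_t and ρ) is invertible, the matrix I_T + (1/σ²)·Q·Λ^{−1}·(Σ_{T,ρ})^{−1}·Λ^{−1} is invertible, and its inverse equals σ²(1−ρ²)·Λ·(Σ*_T)^{−1}·Λ·Q^{−1}. -/

import Mathlib

open Matrix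

/-- The T×T AR(1) correlation (Toeplitz) matrix with entries `ρ^{|i-j|}`. -/
noncomputable def sigmaMat (T : ℕ) (ρ : ℝ) : Matrix (Fin T) (Fin T) ℝ :=
  Matrix.of fun i j => ρ ^ (Int.natAbs ((i : ℤ) - (j : ℤ)))

/-- The tridiagonal matrix `Σ*_T` built from `ρ` and a one-based sequence `ξ`. -/
noncomputable def sigmaStar (T : ℕ) (ρ : ℝ) (ξ : ℕ → ℝ) : Matrix (Fin T) (Fin T) ℝ :=
  Matrix.of fun i j =>
    if i = j then
      (if (i : ℕ) = 0 ∨ (i : ℕ) = T - 1 then 1 + ξ ((i : ℕ) + 1)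
       else 1 + ρ ^ 2 + ξ ((i : ℕ) + 1))
    else if Int.natAbs ((i : ℤ) - (j : ℤ)) = 1 then -ρ else 0

lemma sum_if_coe {T : ℕ} (n : ℕ) (g : Fin T → ℝ) :
    (∑ k : Fin T, if (k : ℕ) = n then g k else 0) = if h : n < T then g ⟨n, h⟩ else 0 := by
  split_ifs with h
  · rw [Finset.sum_eq_single ⟨n, h⟩]
    · simp
    · intro k _ hk
      rw [if_neg]
      simpa [Fin.ext_iff] using hk
    · simp
  · apply Finset.sum_eq_zero
    intro k _
    rw [if_neg]
    exact fun hk => h (hk ▸ k.isLt)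

lemma sigmaStar_apply (T : ℕ) (ρ : ℝ) (ξ : ℕ → ℝ) (i j : Fin T) :
    sigmaStar T ρ ξ i j =
      (if (i : ℕ) = (j : ℕ) then
        (if (i : ℕ) = 0 ∨ (i : ℕ) = T - 1 then 1 + ξ ((i : ℕ) + 1)
         else 1 + ρ ^ 2 + ξ ((i : ℕ) + 1)) else 0)
      + (if (i : ℕ) = (j : ℕ) + 1 then -ρ else 0)
      + (if (j : ℕ) = (i : ℕ) + 1 then -ρ else 0) := by
  simp only [sigmaStar, of_apply, Fin.ext_iff]
  split_ifs <;> first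
    | (exfalso; omega)
    | ring

lemma sigma_mul_star (T : ℕ) (hT : 2 ≤ T) (ρ : ℝ) :
    sigmaMat T ρ * sigmaStar T ρ (fun _ => 0) = (1 - ρ ^ 2) • 1 := by
  ext i j
  rw [mul_apply]
  simp only [sigmaStar_apply, mul_add]
  rw [Finset.sum_add_distrib, Finset.sum_add_distrib]
  have e1 : ∀ k : Fin T, sigmaMat T ρ i k *
      (if (k : ℕ) = (j : ℕ) then
        (if (k : ℕ) = 0 ∨ (k : ℕ) = T - 1 then 1 + (0:ℝ) else 1 + ρ ^ 2 + 0) else 0) =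
      (if (k : ℕ) = (j : ℕ) then sigmaMat T ρ i k *
        (if (j : ℕ) = 0 ∨ (j : ℕ) = T - 1 then 1 else 1 + ρ ^ 2) else 0) := by
    intro k
    by_cases h : (k : ℕ) = (j : ℕ)
    · rw [if_pos h, if_pos h, h]; ring_nf
    · rw [if_neg h, if_neg h, mul_zero]
  have e2 : ∀ k : Fin T, sigmaMat T ρ i k * (if (k : ℕ) = (j : ℕ) + 1 then -ρ else 0) =
      (if (k : ℕ) = (j : ℕ) + 1 then sigmaMat T ρ i k * (-ρ) else 0) := by
    intro k; split_ifs <;> simp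
  have e3 : ∀ k : Fin T, sigmaMat T ρ i k * (if (j : ℕ) = (k : ℕ) + 1 then -ρ else 0) =
      (if (k : ℕ) = (j : ℕ) - 1 then
        (if 1 ≤ (j : ℕ) then sigmaMat T ρ i k * (-ρ) else 0) else 0) := by
    intro k; split_ifs <;> first | (exfalso; omega) | simp
  simp only [e1, e2, e3, sum_if_coe]
  rw [dif_pos j.isLt, dif_pos (show (j:ℕ)-1 < T from by omega)]
  simp only [sigmaMat, of_apply, Matrix.smul_apply, one_apply, smul_eq_mul, Fin.ext_iff]
  have hbT : (j:ℕ) < T := j.isLt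
  have haT : (i:ℕ) < T := i.isLt
  by_cases hb0 : (j:ℕ) = 0
  · rw [if_pos (Or.inl hb0), if_neg (show ¬ 1 ≤ (j:ℕ) from by omega),
      dif_pos (show (j:ℕ)+1 < T from by omega)]
    by_cases ha0 : (i:ℕ) = 0
    · rw [if_pos (show (i:ℕ) = (j:ℕ) from by omega),
        show (((i:ℕ):ℤ) - ((j:ℕ):ℤ)).natAbs = 0 from by omega,
        show (((i:ℕ):ℤ) - (((j:ℕ)+1:ℕ):ℤ)).natAbs = 1 from by omega]
      ring
    · obtain ⟨m, hm⟩ : ∃ m, (i:ℕ) = m + 1 := ⟨(i:ℕ)-1, by omega⟩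
      rw [if_neg (show ¬ (i:ℕ) = (j:ℕ) from by omega),
        show (((i:ℕ):ℤ) - ((j:ℕ):ℤ)).natAbs = m+1 from by omega,
        show (((i:ℕ):ℤ) - (((j:ℕ)+1:ℕ):ℤ)).natAbs = m from by omega, pow_succ]
      ring
  · by_cases hbT1 : (j:ℕ) = T - 1
    · rw [if_pos (Or.inr hbT1), if_pos (show 1 ≤ (j:ℕ) from by omega),
        dif_neg (show ¬ (j:ℕ)+1 < T from by omega)]
      rcases lt_trichotomy (i:ℕ) (j:ℕ) with hab | hab | hab
      · obtain ⟨m, hm⟩ : ∃ m, (j:ℕ) = (i:ℕ) + m + 1 := ⟨(j:ℕ)-(i:ℕ)-1, by omega⟩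
        rw [if_neg (show ¬ (i:ℕ) = (j:ℕ) from by omega),
          show (((i:ℕ):ℤ) - ((j:ℕ):ℤ)).natAbs = m+1 from by omega,
          show (((i:ℕ):ℤ) - (((j:ℕ)-1:ℕ):ℤ)).natAbs = m from by omega, pow_succ]
        ring
      · rw [if_pos hab,
          show (((i:ℕ):ℤ) - ((j:ℕ):ℤ)).natAbs = 0 from by omega,
          show (((i:ℕ):ℤ) - (((j:ℕ)-1:ℕ):ℤ)).natAbs = 1 from by omega]
        ring
      · omega
    · rw [if_neg (show ¬ ((j:ℕ) = 0 ∨ (j:ℕ) = T-1) from by omega),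
        if_pos (show 1 ≤ (j:ℕ) from by omega),
        dif_pos (show (j:ℕ)+1 < T from by omega)]
      rcases lt_trichotomy (i:ℕ) (j:ℕ) with hab | hab | hab
      · obtain ⟨m, hm⟩ : ∃ m, (j:ℕ) = (i:ℕ) + m + 1 := ⟨(j:ℕ)-(i:ℕ)-1, by omega⟩
        rw [if_neg (show ¬ (i:ℕ) = (j:ℕ) from by omega),
          show (((i:ℕ):ℤ) - ((j:ℕ):ℤ)).natAbs = m+1 from by omega,
          show (((i:ℕ):ℤ) - (((j:ℕ)+1:ℕ):ℤ)).natAbs = m+2 from by omega,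
          show (((i:ℕ):ℤ) - (((j:ℕ)-1:ℕ):ℤ)).natAbs = m from by omega,
          pow_succ, pow_succ, pow_succ]
        ring
      · rw [if_pos hab,
          show (((i:ℕ):ℤ) - ((j:ℕ):ℤ)).natAbs = 0 from by omega,
          show (((i:ℕ):ℤ) - (((j:ℕ)+1:ℕ):ℤ)).natAbs = 1 from by omega,
          show (((i:ℕ):ℤ) - (((j:ℕ)-1:ℕ):ℤ)).natAbs = 1 from by omega]
        ring
      · obtain ⟨m, hm⟩ : ∃ m, (i:ℕ) = (j:ℕ) + m + 1 := ⟨(i:ℕ)-(j:ℕ)-1, by omega⟩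
        rw [if_neg (show ¬ (i:ℕ) = (j:ℕ) from by omega),
          show (((i:ℕ):ℤ) - ((j:ℕ):ℤ)).natAbs = m+1 from by omega,
          show (((i:ℕ):ℤ) - (((j:ℕ)+1:ℕ):ℤ)).natAbs = m from by omega,
          show (((i:ℕ):ℤ) - (((j:ℕ)-1:ℕ):ℤ)).natAbs = m+2 from by omega,
          pow_succ, pow_succ, pow_succ]
        ring

/-- Lower-bidiagonal "Cholesky-type" factor of the ξ = 0 tridiagonal matrix. -/
noncomputable def cMat (T : ℕ) (ρ : ℝ) : Matrix (Fin T) (Fin T) ℝ :=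
  Matrix.of fun k l =>
    (if k = l then (if (k : ℕ) = 0 then Real.sqrt (1 - ρ ^ 2) else 1) else 0)
    + (if (k : ℕ) = (l : ℕ) + 1 then -ρ else 0)

lemma star_decomp (T : ℕ) (hT : 2 ≤ T) (ρ : ℝ) (hρ : ρ ^ 2 ≤ 1) (ξ : ℕ → ℝ) :
    sigmaStar T ρ ξ =
      (cMat T ρ)ᴴ * cMat T ρ + Matrix.diagonal (fun i : Fin T => ξ ((i : ℕ) + 1)) := by
  set d : Fin T → ℝ := fun k => if (k : ℕ) = 0 then Real.sqrt (1 - ρ ^ 2) else 1 with hd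
  have hdd : ∀ k : Fin T, d k * d k = if (k : ℕ) = 0 then 1 - ρ ^ 2 else 1 := by
    intro k
    simp only [hd]
    split_ifs
    · exact Real.mul_self_sqrt (by linarith)
    · ring
  ext i j
  rw [Matrix.add_apply, mul_apply, diagonal_apply]
  simp only [conjTranspose_apply, cMat, of_apply, star_trivial]
  have expand : ∀ k : Fin T,
      ((if k = i then d k else 0) + (if (k : ℕ) = (i : ℕ) + 1 then -ρ else 0)) *
      ((if k = j then d k else 0) + (if (k : ℕ) = (j : ℕ) + 1 then -ρ else 0)) =
      (if (k : ℕ) = (i : ℕ) then (if (i : ℕ) = (j : ℕ) then d k * d k else 0) else 0)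
      + (if (k : ℕ) = (i : ℕ) then (if (i : ℕ) = (j : ℕ) + 1 then d k * (-ρ) else 0) else 0)
      + (if (k : ℕ) = (j : ℕ) then (if (j : ℕ) = (i : ℕ) + 1 then (-ρ) * d k else 0) else 0)
      + (if (k : ℕ) = (i : ℕ) + 1 then (if (i : ℕ) = (j : ℕ) then ρ * ρ else 0) else 0) := by
    intro k
    simp only [Fin.ext_iff, hd]
    split_ifs <;> first | (exfalso; omega) | ring
  simp +zetaDelta only [expand]
  rw [Finset.sum_add_distrib, Finset.sum_add_distrib, Finset.sum_add_distrib]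
  simp only [sum_if_coe]
  rw [dif_pos i.isLt, dif_pos i.isLt, dif_pos j.isLt]
  simp +zetaDelta only [Fin.eta, hdd]
  rw [sigmaStar_apply]
  by_cases hiT : (i : ℕ) + 1 < T
  · rw [dif_pos hiT]
    simp only [Fin.ext_iff, hd]
    split_ifs <;> first | (exfalso; omega) | ring
  · rw [dif_neg hiT]
    simp only [Fin.ext_iff, hd]
    split_ifs <;> first | (exfalso; omega) | ring

/-- with `ξ_t = σ²(1−ρ²)λ_t²/q_t`, `Λ = diag(λ_1,…,λ_T)` and
`Q = diag(q_1,…,q_T)`, the matrix `Σ*_T` is invertible, the matrix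
`I_T + (1/σ²)·Q·Λ⁻¹·(Σ_{T,ρ})⁻¹·Λ⁻¹` is invertible, and its inverse equals
`σ²(1−ρ²)·Λ·(Σ*_T)⁻¹·Λ·Q⁻¹`. -/
theorem stmt7 (T : ℕ) (hT : 2 ≤ T) (ρ : ℝ) (hρ1 : -1 < ρ) (hρ2 : ρ < 1)
    (σ : ℝ) (hσ : 0 < σ) (lam q : ℕ → ℝ)
    (hlam : ∀ t, 1 ≤ t → t ≤ T → 0 < lam t)
    (hq : ∀ t, 1 ≤ t → t ≤ T → 0 < q t) :
    IsUnit (sigmaStar T ρ (fun t => σ ^ 2 * (1 - ρ ^ 2) * (lam t) ^ 2 / q t)) ∧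
    IsUnit ((1 : Matrix (Fin T) (Fin T) ℝ) +
      (1 / σ ^ 2) • (Matrix.diagonal (fun i : Fin T => q ((i : ℕ) + 1)) *
        (Matrix.diagonal (fun i : Fin T => lam ((i : ℕ) + 1)))⁻¹ *
        (sigmaMat T ρ)⁻¹ *
        (Matrix.diagonal (fun i : Fin T => lam ((i : ℕ) + 1)))⁻¹)) ∧
    ((1 : Matrix (Fin T) (Fin T) ℝ) +
      (1 / σ ^ 2) • (Matrix.diagonal (fun i : Fin T => q ((i : ℕ) + 1)) *
        (Matrix.diagonal (fun i : Fin T => lam ((i : ℕ) + 1)))⁻¹ *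
        (sigmaMat T ρ)⁻¹ *
        (Matrix.diagonal (fun i : Fin T => lam ((i : ℕ) + 1)))⁻¹))⁻¹ =
      (σ ^ 2 * (1 - ρ ^ 2)) •
        (Matrix.diagonal (fun i : Fin T => lam ((i : ℕ) + 1)) *
          (sigmaStar T ρ (fun t => σ ^ 2 * (1 - ρ ^ 2) * (lam t) ^ 2 / q t))⁻¹ *
          Matrix.diagonal (fun i : Fin T => lam ((i : ℕ) + 1)) *
          (Matrix.diagonal (fun i : Fin T => q ((i : ℕ) + 1)))⁻¹) := by
  have h1ρ : 0 < 1 - ρ ^ 2 := by nlinarith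
  set ξ : ℕ → ℝ := fun t => σ ^ 2 * (1 - ρ ^ 2) * (lam t) ^ 2 / q t with hξ
  have hlam' : ∀ i : Fin T, 0 < lam ((i : ℕ) + 1) :=
    fun i => hlam _ (by omega) (by omega)
  have hq' : ∀ i : Fin T, 0 < q ((i : ℕ) + 1) :=
    fun i => hq _ (by omega) (by omega)
  have hξpos : ∀ i : Fin T, 0 < ξ ((i : ℕ) + 1) := by
    intro i
    exact div_pos (mul_pos (mul_pos (pow_pos hσ 2) h1ρ) (pow_pos (hlam' i) 2)) (hq' i)
  -- positive definiteness, hence invertibility, of Σ*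
  have hSstarPD : (sigmaStar T ρ ξ).PosDef := by
    rw [star_decomp T hT ρ (by nlinarith) ξ]
    exact Matrix.PosDef.posSemidef_add (Matrix.posSemidef_conjTranspose_mul_self _)
      (Matrix.PosDef.diagonal hξpos)
  have hSstarUnit : IsUnit (sigmaStar T ρ ξ) := hSstarPD.isUnit
  refine ⟨hSstarUnit, ?_⟩
  -- inverse of the AR(1) matrix
  set S0 : Matrix (Fin T) (Fin T) ℝ := sigmaStar T ρ (fun _ => 0) with hS0
  have hSigmaRight : sigmaMat T ρ * ((1 - ρ ^ 2)⁻¹ • S0) = 1 := by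
    rw [Matrix.mul_smul, sigma_mul_star T hT ρ, smul_smul, inv_mul_cancel₀ h1ρ.ne', one_smul]
  have hSigmaInv : (sigmaMat T ρ)⁻¹ = (1 - ρ ^ 2)⁻¹ • S0 :=
    Matrix.inv_eq_right_inv hSigmaRight
  -- diagonal matrices and their inverses
  set Λ : Matrix (Fin T) (Fin T) ℝ :=
    Matrix.diagonal (fun i : Fin T => lam ((i : ℕ) + 1)) with hΛ
  set Q : Matrix (Fin T) (Fin T) ℝ :=
    Matrix.diagonal (fun i : Fin T => q ((i : ℕ) + 1)) with hQ
  have hΛinv : Λ⁻¹ = Matrix.diagonal (fun i : Fin T => (lam ((i : ℕ) + 1))⁻¹) := by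
    apply Matrix.inv_eq_right_inv
    rw [hΛ, Matrix.diagonal_mul_diagonal, ← Matrix.diagonal_one]
    rw [Matrix.diagonal_eq_diagonal_iff]
    exact fun i => mul_inv_cancel₀ (hlam' i).ne'
  have hQinv : Q⁻¹ = Matrix.diagonal (fun i : Fin T => (q ((i : ℕ) + 1))⁻¹) := by
    apply Matrix.inv_eq_right_inv
    rw [hQ, Matrix.diagonal_mul_diagonal, ← Matrix.diagonal_one]
    rw [Matrix.diagonal_eq_diagonal_iff]
    exact fun i => mul_inv_cancel₀ (hq' i).ne'
  have hΛcancel : Λ⁻¹ * Λ = 1 := by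
    rw [hΛinv, hΛ, Matrix.diagonal_mul_diagonal, ← Matrix.diagonal_one]
    rw [Matrix.diagonal_eq_diagonal_iff]
    exact fun i => inv_mul_cancel₀ (hlam' i).ne'
  have hQcancel : Q * Q⁻¹ = 1 := by
    rw [hQinv, hQ, Matrix.diagonal_mul_diagonal, ← Matrix.diagonal_one]
    rw [Matrix.diagonal_eq_diagonal_iff]
    exact fun i => mul_inv_cancel₀ (hq' i).ne'
  -- Σ* = S0 + diag ξ
  have hstar_eq : sigmaStar T ρ ξ = S0 + Matrix.diagonal (fun i : Fin T => ξ ((i : ℕ) + 1)) := by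
    rw [star_decomp T hT ρ (by nlinarith) ξ, hS0, star_decomp T hT ρ (by nlinarith) (fun _ => 0)]
    simp
  -- the middle diagonal product is a scalar matrix
  have hmiddle : Q * Λ⁻¹ * Matrix.diagonal (fun i : Fin T => ξ ((i : ℕ) + 1)) * Λ⁻¹ =
      (σ ^ 2 * (1 - ρ ^ 2)) • (1 : Matrix (Fin T) (Fin T) ℝ) := by
    rw [hΛinv, hQ, Matrix.diagonal_mul_diagonal, Matrix.diagonal_mul_diagonal,
      Matrix.diagonal_mul_diagonal, ← Matrix.diagonal_one, ← Matrix.diagonal_smul,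
      Matrix.diagonal_eq_diagonal_iff]
    intro i
    have h1 : q ((i:ℕ)+1) ≠ 0 := (hq' i).ne'
    have h2 : lam ((i:ℕ)+1) ≠ 0 := (hlam' i).ne'
    simp only [hξ, Pi.smul_apply, smul_eq_mul, mul_one]
    field_simp
  -- rewrite M as a scalar multiple of Q Λ⁻¹ Σ* Λ⁻¹
  have hM : (1 : Matrix (Fin T) (Fin T) ℝ) +
      (1 / σ ^ 2) • (Q * Λ⁻¹ * (sigmaMat T ρ)⁻¹ * Λ⁻¹) =
      (σ ^ 2 * (1 - ρ ^ 2))⁻¹ • (Q * Λ⁻¹ * sigmaStar T ρ ξ * Λ⁻¹) := by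
    rw [hstar_eq, hSigmaInv]
    rw [Matrix.mul_add, Matrix.add_mul, smul_add, hmiddle,
      smul_smul, inv_mul_cancel₀ (mul_pos (pow_pos hσ 2) h1ρ).ne', one_smul]
    rw [Matrix.mul_smul, Matrix.smul_mul, smul_smul]
    rw [add_comm, show (1 / σ ^ 2) * (1 - ρ ^ 2)⁻¹ = (σ ^ 2 * (1 - ρ ^ 2))⁻¹ from by
      rw [mul_inv]; ring]
  -- the right inverse
  have hSstarCancel : sigmaStar T ρ ξ * (sigmaStar T ρ ξ)⁻¹ = 1 :=
    Matrix.mul_nonsing_inv _ ((Matrix.isUnit_iff_isUnit_det _).mp hSstarUnit)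
  have hMN : ((1 : Matrix (Fin T) (Fin T) ℝ) +
      (1 / σ ^ 2) • (Q * Λ⁻¹ * (sigmaMat T ρ)⁻¹ * Λ⁻¹)) *
      ((σ ^ 2 * (1 - ρ ^ 2)) • (Λ * (sigmaStar T ρ ξ)⁻¹ * Λ * Q⁻¹)) = 1 := by
    rw [hM, Matrix.smul_mul, Matrix.mul_smul, smul_smul,
      inv_mul_cancel₀ (mul_pos (pow_pos hσ 2) h1ρ).ne', one_smul]
    have cancelΛ : ∀ X : Matrix (Fin T) (Fin T) ℝ, Λ⁻¹ * (Λ * X) = X := by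
      intro X; rw [← Matrix.mul_assoc, hΛcancel, Matrix.one_mul]
    have cancelS : ∀ X : Matrix (Fin T) (Fin T) ℝ,
        sigmaStar T ρ ξ * ((sigmaStar T ρ ξ)⁻¹ * X) = X := by
      intro X; rw [← Matrix.mul_assoc, hSstarCancel, Matrix.one_mul]
    calc Q * Λ⁻¹ * sigmaStar T ρ ξ * Λ⁻¹ * (Λ * (sigmaStar T ρ ξ)⁻¹ * Λ * Q⁻¹)
        = Q * (Λ⁻¹ * (sigmaStar T ρ ξ * (Λ⁻¹ * (Λ * ((sigmaStar T ρ ξ)⁻¹ * (Λ * Q⁻¹)))))) := by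
          simp only [Matrix.mul_assoc]
      _ = Q * (Λ⁻¹ * (sigmaStar T ρ ξ * ((sigmaStar T ρ ξ)⁻¹ * (Λ * Q⁻¹)))) := by
          rw [cancelΛ]
      _ = Q * (Λ⁻¹ * (Λ * Q⁻¹)) := by rw [cancelS]
      _ = Q * Q⁻¹ := by rw [cancelΛ]
      _ = 1 := hQcancel
  constructor
  · exact (Matrix.isUnit_iff_isUnit_det _).mpr (Matrix.isUnit_det_of_right_inverse hMN)
  · exact Matrix.inv_eq_right_inv hMN
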